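/- Consider the drawdown-modulated feedback controller I(k) = γ·M(k)·V(k) with a constant gain γ satisfying −1/X_max ≤ γ ≤ 1/|X_min|, where M(k) = (d_max − d(k))/(1 − d(k)). If every realized return satisfies X_min ≤ X(k) ≤ X_max, then for all stages k = 0, 1, …, N: the account value obeys V(k+1) = (1 + γ·M(k)·X(k))·V(k), the drawdown satisfies d(k) ≤ d_max, and V(k) > 0. -/

import Mathlib

/-- Running maximum `V_max(k) = max_{0 ≤ i ≤ k} V(i)` of the account value. -/
noncomputable def runMax (V : ℕ → ℝ) (k : ℕ) : ℝ :=
  (Finset.range (k + 1)).sup' Finset.nonempty_range_add_one V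

/-- Percentage drawdown `d(k) = (V_max(k) - V(k)) / V_max(k)`. -/
noncomputable def drawdown (V : ℕ → ℝ) (k : ℕ) : ℝ :=
  (runMax V k - V k) / runMax V k

lemma le_runMax (V : ℕ → ℝ) (k : ℕ) : V k ≤ runMax V k :=
  Finset.le_sup' V (Finset.self_mem_range_succ k)

lemma runMax_succ (V : ℕ → ℝ) (k : ℕ) :
    runMax V (k + 1) = max (V (k + 1)) (runMax V k) := by
  apply le_antisymm
  · apply Finset.sup'_le
    intro i hi
    rcases Nat.lt_succ_iff_lt_or_eq.1 (Finset.mem_range.1 hi) with h | h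
    · exact le_max_of_le_right (Finset.le_sup' V (Finset.mem_range.2 h))
    · subst h; exact le_max_left _ _
  · apply max_le
    · exact Finset.le_sup' V (Finset.self_mem_range_succ (k + 1))
    · apply Finset.sup'_le
      intro i hi
      exact Finset.le_sup' V (Finset.mem_range.2
        (lt_trans (Finset.mem_range.1 hi) (Nat.lt_succ_self _)))

lemma runMax_pos {V : ℕ → ℝ} (hV0 : 0 < V 0) (k : ℕ) : 0 < runMax V k :=
  lt_of_lt_of_le hV0 (Finset.le_sup' V (Finset.mem_range.2 (Nat.succ_pos k)))

set_option maxHeartbeats 1000000 in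
theorem drawdown_modulated_feedback_control
    (N : ℕ) (V I X : ℕ → ℝ) (Xmin Xmax dmax γ : ℝ)
    (hXmin1 : -1 < Xmin) (hXmin0 : Xmin < 0) (hXmax : 0 < Xmax)
    (hdmax0 : 0 < dmax) (hdmax1 : dmax < 1)
    (hγlo : -(1 / Xmax) ≤ γ) (hγhi : γ ≤ 1 / |Xmin|)
    (hV0 : 0 < V 0)
    (hrec : ∀ k, V (k + 1) = V k + I k * X k)
    (hctrl : ∀ k, I k = γ * ((dmax - drawdown V k) / (1 - drawdown V k)) * V k)
    (hX : ∀ k, Xmin ≤ X k ∧ X k ≤ Xmax) :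
    ∀ k ≤ N,
      V (k + 1) = (1 + γ * ((dmax - drawdown V k) / (1 - drawdown V k)) * X k) * V k ∧
      drawdown V k ≤ dmax ∧ 0 < V k := by
  have habs : |Xmin| = -Xmin := abs_of_neg hXmin0
  -- key invariant
  have inv : ∀ k, 0 < V k ∧ (1 - dmax) * runMax V k ≤ V k := by
    intro k
    induction k with
    | zero =>
      refine ⟨hV0, ?_⟩
      have h0 : runMax V 0 = V 0 := by
        unfold runMax; simp
      rw [h0]; nlinarith
    | succ k ih =>
      obtain ⟨hVk, hinv⟩ := ih
      obtain ⟨R, hR⟩ : ∃ x, runMax V k = x := ⟨_, rfl⟩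
      rw [hR] at hinv
      have hRpos : 0 < R := hR ▸ runMax_pos hV0 k
      have hVleR : V k ≤ R := hR ▸ le_runMax V k
      obtain ⟨d, hd⟩ : ∃ x, drawdown V k = x := ⟨_, rfl⟩
      have hdval : d = (R - V k) / R := by rw [← hd, ← hR]; rfl
      have hd0 : 0 ≤ d := by
        rw [hdval]; exact div_nonneg (by linarith) hRpos.le
      have hVkR : V k = (1 - d) * R := by
        rw [hdval]; field_simp; ring
      have hd1 : d < 1 := by nlinarith
      have hddmax : d ≤ dmax := by
        rw [hdval, div_le_iff₀ hRpos]; nlinarith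
      obtain ⟨Mo, hMo⟩ : ∃ x, (dmax - d) / (1 - d) = x := ⟨_, rfl⟩
      have hMo0 : 0 ≤ Mo := by
        rw [← hMo]; apply div_nonneg <;> linarith
      have hMomul : Mo * (1 - d) = dmax - d := by
        rw [← hMo]; exact div_mul_cancel₀ _ (show (0:ℝ) < 1 - d by linarith).ne'
      have hModmax : Mo ≤ dmax := by nlinarith
      -- bound on γ * X k
      obtain ⟨hXlo, hXhi⟩ := hX k
      have hγX : -1 ≤ γ * X k := by
        rcases le_or_gt 0 (X k) with hx | hx
        · have h1 : -(1 / Xmax) * X k ≤ γ * X k :=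
            mul_le_mul_of_nonneg_right hγlo hx
          have h2 : (1 / Xmax) * X k ≤ 1 := by
            rw [div_mul_eq_mul_div, div_le_one hXmax]; nlinarith
          nlinarith
        · have h1 : γ * X k ≥ (1 / |Xmin|) * X k :=
            mul_le_mul_of_nonpos_right hγhi (le_of_lt hx)
          rw [habs] at h1
          have hXm : 0 < -Xmin := by linarith
          have h2 : (1 / -Xmin) * X k ≥ -1 := by
            rw [div_mul_eq_mul_div, ge_iff_le, le_div_iff₀ hXm]; nlinarith
          linarith
      have hcoef : 1 - Mo ≤ 1 + γ * Mo * X k := by nlinarith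
      have hcoefpos : 0 < 1 + γ * Mo * X k := by nlinarith
      have hVs : V (k + 1) = (1 + γ * Mo * X k) * V k := by
        rw [hrec k, hctrl k, hd, hMo]; ring
      have hVspos : 0 < V (k + 1) := by
        rw [hVs]; positivity
      refine ⟨hVspos, ?_⟩
      rw [runMax_succ, hR]
      rcases le_total R (V (k + 1)) with hc | hc
      · rw [max_eq_left hc]
        calc (1 - dmax) * V (k + 1) ≤ 1 * V (k + 1) :=
              mul_le_mul_of_nonneg_right (by linarith) hVspos.le
          _ = V (k + 1) := one_mul _
      · rw [max_eq_right hc]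
        have key : (1 - dmax) * R ≤ (1 - Mo) * V k := by
          have keyeq : (1 - Mo) * V k = (1 - dmax) * R := by
            rw [hVkR]; linear_combination (-R) * hMomul
          linarith
        have h3 : (1 - Mo) * V k ≤ V (k + 1) := by
          rw [hVs]
          exact mul_le_mul_of_nonneg_right hcoef (le_of_lt hVk)
        linarith
  intro k _
  obtain ⟨hVk, hinv⟩ := inv k
  have hRpos : 0 < runMax V k := runMax_pos hV0 k
  refine ⟨by rw [hrec k, hctrl k]; ring, ?_, hVk⟩
  unfold drawdown
  rw [div_le_iff₀ hRpos]
  nlinarith
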